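/- Let θ0 ∈ Θ be the true parameter, let S be distributed on 𝕊 according to f(·|θ0), let G(s,θ0) = ∑_{s'∈𝕊} 1{f(s'|θ0) ≤ f(s|θ0)}·f(s'|θ0), and define ε = max_{s∈𝕊} P(f(S|θ0) = f(s|θ0)) = max_{s∈𝕊} ∑_{s'∈𝕊 : f(s'|θ0) = f(s|θ0)} f(s'|θ0). Then for every α ∈ (0,1), the non-coverage probability of the alternative construction satisfies P(θ0 ∉ Θ̂^alt_{1−α}(S)) ≥ α − ε; equivalently, ∑_{s ∈ 𝕊 : G(s,θ0) ≤ α} f(s|θ0) ≥ α − ε. -/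
import Mathlib


open Finset

/-- G(s,θ) = ∑_{s'∈𝕊} 1{f(s'|θ) ≤ f(s|θ)}·f(s'|θ). -/
noncomputable def Galt {S Θ : Type*} [Fintype S]
    (f : Θ → S → ℝ) (s : S) (θ : Θ) : ℝ :=
  ∑ s', if f θ s' ≤ f θ s then f θ s' else 0

/-- Near-exactness lower bound (Remark 3): with
ε = max_{s} P(f(S|θ0) = f(s|θ0)), the non-coverage probability of the
alternative construction satisfies
∑_{s : G(s,θ0) ≤ α} f(s|θ0) ≥ α − ε. -/
theorem alt_noncoverage_lower_bound
    {S Θ : Type*} [Fintype S] [Nonempty S] [Fintype Θ]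
    (f : Θ → S → ℝ)
    (hnonneg : ∀ θ s, 0 ≤ f θ s)
    (hsum : ∀ θ, ∑ s, f θ s = 1)
    (θ0 : Θ) (α : ℝ) (hα : α ∈ Set.Ioo (0 : ℝ) 1) :
    α - (Finset.univ.sup' Finset.univ_nonempty
          (fun s : S => ∑ s', if f θ0 s' = f θ0 s then f θ0 s' else 0)) ≤
      ∑ s ∈ Finset.univ.filter (fun s => Galt f s θ0 ≤ α), f θ0 s := by
  obtain ⟨hα0, hα1⟩ := hα
  set ε := Finset.univ.sup' Finset.univ_nonempty
      (fun s : S => ∑ s', if f θ0 s' = f θ0 s then f θ0 s' else 0) with hε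
  have hε0 : 0 ≤ ε := by
    obtain ⟨s⟩ := ‹Nonempty S›
    refine le_trans ?_ (Finset.le_sup' _ (Finset.mem_univ s))
    exact Finset.sum_nonneg fun s' _ => by
      split_ifs
      · exact hnonneg θ0 s'
      · exact le_refl 0
  by_cases hB : ∀ s, Galt f s θ0 ≤ α
  · have hAall : (Finset.univ.filter (fun s => Galt f s θ0 ≤ α)) = Finset.univ := by
      ext s; simp [hB s]
    rw [hAall, hsum θ0]
    linarith
  · push_neg at hB
    have hBne : (Finset.univ.filter fun s => α < Galt f s θ0).Nonempty := by
      obtain ⟨s, hs⟩ := hB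
      exact ⟨s, by simp [hs]⟩
    obtain ⟨s', hs'mem, hmin⟩ := Finset.exists_min_image
      (Finset.univ.filter fun s => α < Galt f s θ0) (f θ0) hBne
    have hs' : α < Galt f s' θ0 := (Finset.mem_filter.mp hs'mem).2
    -- every s'' with f θ0 s'' < f θ0 s' is in the non-coverage set
    have hsub : ∀ s'' : S, f θ0 s'' < f θ0 s' → Galt f s'' θ0 ≤ α := by
      intro s'' h
      by_contra hc
      have := hmin s'' (by simp [lt_of_not_ge hc])
      linarith
    have hsplit : Galt f s' θ0 =
        (∑ s'', if f θ0 s'' < f θ0 s' then f θ0 s'' else 0) +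
        (∑ s'', if f θ0 s'' = f θ0 s' then f θ0 s'' else 0) := by
      rw [Galt, ← Finset.sum_add_distrib]
      refine Finset.sum_congr rfl fun s'' _ => ?_
      rcases lt_trichotomy (f θ0 s'') (f θ0 s') with h | h | h
      · simp [h, h.le, h.ne]
      · simp [h]
      · simp [not_le.mpr h, (not_lt.mpr h.le : ¬ f θ0 s'' < f θ0 s'), h.ne']
    have h1 : (∑ s'', if f θ0 s'' < f θ0 s' then f θ0 s'' else 0) ≤
        ∑ s ∈ Finset.univ.filter (fun s => Galt f s θ0 ≤ α), f θ0 s := by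
      rw [← Finset.sum_filter]
      refine Finset.sum_le_sum_of_subset_of_nonneg ?_ (fun s _ _ => hnonneg θ0 s)
      intro s hs
      simp only [Finset.mem_filter, Finset.mem_univ, true_and] at hs ⊢
      exact hsub s hs
    have h2 : (∑ s'', if f θ0 s'' = f θ0 s' then f θ0 s'' else 0) ≤ ε :=
      Finset.le_sup' (fun s : S => ∑ s'', if f θ0 s'' = f θ0 s then f θ0 s'' else 0)
        (Finset.mem_univ s')
    linarith
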